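/- Let G be a connected P₄-free graph with at least two vertices such that every minimum connected dominating set of G that induces a single edge {v,w} has A = N(v)\N[w] ≠ ∅ and B = N(w)\N[v] ≠ ∅. Then, with C₁, C₂, C₃ defined as the vertices of C = N(v)∩N(w) dominating A only, B only, or both respectively, G is the join of the induced subgraphs G[{v} ∪ B ∪ C₁ ∪ C₃] and G[{w} ∪ A ∪ C₂]. -/

import Mathlib

open SimpleGraph

/-- The join of two graphs on disjoint vertex sets: disjoint union plus all cross edges. -/
def gJoin {α β : Type*} (G : SimpleGraph α) (H : SimpleGraph β) : SimpleGraph (α ⊕ β) where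
  Adj x y := match x, y with
    | Sum.inl a, Sum.inl b => G.Adj a b
    | Sum.inr a, Sum.inr b => H.Adj a b
    | Sum.inl _, Sum.inr _ => True
    | Sum.inr _, Sum.inl _ => True
  symm := ⟨by rintro (a|a) (b|b) h <;> first | exact h.symm | trivial⟩
  loopless := ⟨by rintro (a|a) h; exacts [G.ne_of_adj h rfl, H.ne_of_adj h rfl]⟩

/-- A graph is `P₄`-free if it has no induced subgraph isomorphic to the path on 4 vertices. -/
def P4Free {V : Type*} (G : SimpleGraph V) : Prop :=
  IsEmpty (SimpleGraph.pathGraph 4 ↪g G)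

/-- `T` is a connected dominating set of `G`. -/
def IsConnDomSet {V : Type*} (G : SimpleGraph V) (T : Set V) : Prop :=
  T.Nonempty ∧ (G.induce T).Connected ∧ ∀ u ∉ T, ∃ t ∈ T, G.Adj u t

/-- `T` is a minimum connected dominating set of `G`. -/
def IsMinConnDomSet {V : Type*} (G : SimpleGraph V) (T : Set V) : Prop :=
  IsConnDomSet G T ∧ ∀ T' : Set V, IsConnDomSet G T' → T.ncard ≤ T'.ncard

/-- The graph `K₁ ⊔ K₂`: three vertices, exactly one edge (between 0 and 1). -/
def graphK1K2 : SimpleGraph (Fin 3) := SimpleGraph.fromRel (fun a b => a = 0 ∧ b = 1)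

/-- The star `K_{1,3}`: vertex 0 adjacent to 1, 2, 3. -/
def graphK13 : SimpleGraph (Fin 4) := SimpleGraph.fromRel (fun a _ => a = 0)

/-- The graph `B = K₁ * (K₁ ⊔ K₂)`: vertex 0 adjacent to all, plus the edge 2-3. -/
def graphB : SimpleGraph (Fin 4) := SimpleGraph.fromRel (fun a b => a = 0 ∨ (a = 2 ∧ b = 3))

lemma no_p4 {V : Type*} {G : SimpleGraph V} (h4 : P4Free G) {a b c d : V}
    (hab : G.Adj a b) (hbc : G.Adj b c) (hcd : G.Adj c d)
    (hac : ¬G.Adj a c) (had : ¬G.Adj a d) (hbd : ¬G.Adj b d) : False := by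
  have h1 : a ≠ b := hab.ne
  have h2 : b ≠ c := hbc.ne
  have h3 : c ≠ d := hcd.ne
  have h4' : a ≠ c := fun h => had (h ▸ hcd)
  have h5 : a ≠ d := fun h => hac (h ▸ hcd.symm)
  have h6 : b ≠ d := fun h => had (h ▸ hab)
  refine h4.false ⟨⟨![a,b,c,d], ?_⟩, ?_⟩
  · intro i j hij
    fin_cases i <;> fin_cases j <;> simp_all
  · intro i j
    fin_cases i <;> fin_cases j <;>
      simp [SimpleGraph.pathGraph_adj, show ((3:Fin 4):ℕ) = 3 from rfl] <;>
      first
        | exact fun h => G.loopless _ h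
        | exact hab | exact hab.symm | exact hbc | exact hbc.symm
        | exact hcd | exact hcd.symm
        | exact hac | exact fun h => hac h.symm
        | exact had | exact fun h => had h.symm
        | exact hbd | exact fun h => hbd h.symm

/-- If {v,w} is a minimum connected dominating set of a connected P₄-free graph G which is
an edge, and A = N(v)\N[w] and B = N(w)\N[v] are both nonempty, then G is the join of the
induced subgraphs on {v} ∪ B ∪ C₁ ∪ C₃ and {w} ∪ A ∪ C₂. -/
theorem stmt5 {V : Type} [Fintype V] (G : SimpleGraph V) (hc : G.Connected)
    (h4 : P4Free G) (v w : V) (hvw : G.Adj v w)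
    (hmin : IsMinConnDomSet G {v, w})
    (A B C C₁ C₂ C₃ V₁ V₂ : Set V)
    (hA : A = G.neighborSet v \ (G.neighborSet w ∪ {w}))
    (hB : B = G.neighborSet w \ (G.neighborSet v ∪ {v}))
    (hC : C = G.neighborSet v ∩ G.neighborSet w)
    (hAne : A.Nonempty) (hBne : B.Nonempty)
    (hC₁ : C₁ = {x ∈ C | A ⊆ G.neighborSet x ∧ ¬ B ⊆ G.neighborSet x})
    (hC₂ : C₂ = {x ∈ C | ¬ A ⊆ G.neighborSet x ∧ B ⊆ G.neighborSet x})
    (hC₃ : C₃ = {x ∈ C | A ⊆ G.neighborSet x ∧ B ⊆ G.neighborSet x})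
    (hV₁ : V₁ = {v} ∪ B ∪ C₁ ∪ C₃) (hV₂ : V₂ = {w} ∪ A ∪ C₂) :
    V₁ ∪ V₂ = Set.univ ∧ V₁ ∩ V₂ = ∅ ∧ ∀ x ∈ V₁, ∀ y ∈ V₂, G.Adj x y := by
  have hAmem : ∀ a, a ∈ A ↔ G.Adj v a ∧ ¬ G.Adj w a ∧ a ≠ w := by
    intro a; rw [hA]
    simp only [Set.mem_diff, SimpleGraph.mem_neighborSet, Set.mem_union,
      Set.mem_singleton_iff, not_or]
  have hBmem : ∀ b, b ∈ B ↔ G.Adj w b ∧ ¬ G.Adj v b ∧ b ≠ v := by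
    intro b; rw [hB]
    simp only [Set.mem_diff, SimpleGraph.mem_neighborSet, Set.mem_union,
      Set.mem_singleton_iff, not_or]
  have hCmem : ∀ x, x ∈ C ↔ G.Adj v x ∧ G.Adj w x := by
    intro x; rw [hC]
    simp only [Set.mem_inter_iff, SimpleGraph.mem_neighborSet]
  -- every vertex of A is adjacent to every vertex of B
  have keyAB : ∀ a ∈ A, ∀ b ∈ B, G.Adj a b := by
    intro a ha b hb
    rw [hAmem] at ha; rw [hBmem] at hb
    by_contra hab
    exact no_p4 h4 ha.1.symm hvw hb.1 (fun h => ha.2.1 h.symm) hab hb.2.1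
  -- every vertex of C dominates all of A or all of B
  have keyC : ∀ x ∈ C, A ⊆ G.neighborSet x ∨ B ⊆ G.neighborSet x := by
    intro x hx
    by_contra hcon
    push_neg at hcon
    obtain ⟨a, ha, hxa⟩ := Set.not_subset.mp hcon.1
    obtain ⟨b, hb, hxb⟩ := Set.not_subset.mp hcon.2
    rw [SimpleGraph.mem_neighborSet] at hxa hxb
    have hab := keyAB a ha b hb
    rw [hCmem] at hx
    rw [hAmem] at ha; rw [hBmem] at hb
    exact no_p4 h4 hx.1.symm ha.1 hab hxa hxb hb.2.1
  -- cross adjacency inside C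
  have keyCC : ∀ x ∈ C, A ⊆ G.neighborSet x → ∀ y ∈ C, ¬ A ⊆ G.neighborSet y → G.Adj x y := by
    intro x hx hxA y hy hyA
    rw [hCmem] at hx hy
    obtain ⟨a, ha, hya⟩ := Set.not_subset.mp hyA
    rw [SimpleGraph.mem_neighborSet] at hya
    have hxa : G.Adj x a := (G.mem_neighborSet x a).mp (hxA ha)
    have haw : ¬ G.Adj a w := fun h => ((hAmem a).mp ha).2.1 h.symm
    by_contra hxy
    exact no_p4 h4 hxa.symm hx.2.symm hy.2 haw (fun h => hya h.symm) hxy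
  have cover : ∀ u, u ∈ V₁ ∪ V₂ := by
    intro u
    rw [hV₁, hV₂]
    simp only [Set.mem_union, Set.mem_singleton_iff]
    by_cases huv : u = v
    · tauto
    by_cases huw : u = w
    · tauto
    by_cases h1 : G.Adj v u <;> by_cases h2 : G.Adj w u
    · have hu : u ∈ C := (hCmem u).mpr ⟨h1, h2⟩
      by_cases hA' : A ⊆ G.neighborSet u <;> by_cases hB' : B ⊆ G.neighborSet u
      · have : u ∈ C₃ := by rw [hC₃]; exact ⟨hu, hA', hB'⟩
        tauto
      · have : u ∈ C₁ := by rw [hC₁]; exact ⟨hu, hA', hB'⟩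
        tauto
      · have : u ∈ C₂ := by rw [hC₂]; exact ⟨hu, hA', hB'⟩
        tauto
      · rcases keyC u hu with h | h <;> tauto
    · have : u ∈ A := (hAmem u).mpr ⟨h1, h2, huw⟩
      tauto
    · have : u ∈ B := (hBmem u).mpr ⟨h2, h1, huv⟩
      tauto
    · obtain ⟨t, ht, hadj⟩ := hmin.1.2.2 u (by simp [Set.mem_insert_iff, huv, huw])
      rw [Set.mem_insert_iff, Set.mem_singleton_iff] at ht
      rcases ht with rfl | rfl
      exacts [absurd hadj.symm h1, absurd hadj.symm h2]
  refine ⟨?_, ?_, ?_⟩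
  · ext u
    simp only [Set.mem_univ, iff_true]
    exact cover u
  · ext u
    simp only [Set.mem_inter_iff, Set.mem_empty_iff_false, iff_false, not_and]
    intro h1 h2
    rw [hV₁] at h1; rw [hV₂] at h2
    rcases h1 with ((h1 | h1) | h1) | h1 <;> rcases h2 with (h2 | h2) | h2
    · rw [Set.mem_singleton_iff] at h1 h2; exact hvw.ne (h1 ▸ h2 ▸ rfl)
    · rw [Set.mem_singleton_iff] at h1; subst h1
      exact G.loopless.irrefl u ((hAmem u).mp h2).1
    · rw [Set.mem_singleton_iff] at h1; subst h1
      rw [hC₂] at h2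
      exact G.loopless.irrefl u ((hCmem u).mp h2.1).1
    · rw [Set.mem_singleton_iff] at h2; subst h2
      exact G.loopless.irrefl u ((hBmem u).mp h1).1
    · exact ((hBmem u).mp h1).2.1 ((hAmem u).mp h2).1
    · rw [hC₂] at h2
      exact ((hBmem u).mp h1).2.1 ((hCmem u).mp h2.1).1
    · rw [Set.mem_singleton_iff] at h2; subst h2
      rw [hC₁] at h1
      exact G.loopless.irrefl u ((hCmem u).mp h1.1).2
    · rw [hC₁] at h1
      exact ((hAmem u).mp h2).2.1 ((hCmem u).mp h1.1).2
    · rw [hC₁] at h1; rw [hC₂] at h2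
      exact h2.2.1 h1.2.1
    · rw [Set.mem_singleton_iff] at h2; subst h2
      rw [hC₃] at h1
      exact G.loopless.irrefl u ((hCmem u).mp h1.1).2
    · rw [hC₃] at h1
      exact ((hAmem u).mp h2).2.1 ((hCmem u).mp h1.1).2
    · rw [hC₃] at h1; rw [hC₂] at h2
      exact h2.2.1 h1.2.1
  · intro x hx y hy
    rw [hV₁] at hx; rw [hV₂] at hy
    rcases hx with ((hx | hx) | hx) | hx <;> rcases hy with (hy | hy) | hy
    · rw [Set.mem_singleton_iff] at hx hy; subst hx; subst hy; exact hvw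
    · rw [Set.mem_singleton_iff] at hx; subst hx
      exact ((hAmem y).mp hy).1
    · rw [Set.mem_singleton_iff] at hx; subst hx
      rw [hC₂] at hy
      exact ((hCmem y).mp hy.1).1
    · rw [Set.mem_singleton_iff] at hy; subst hy
      exact ((hBmem x).mp hx).1.symm
    · exact (keyAB y hy x hx).symm
    · rw [hC₂] at hy
      exact ((G.mem_neighborSet y x).mp (hy.2.2 hx)).symm
    · rw [Set.mem_singleton_iff] at hy; subst hy
      rw [hC₁] at hx
      exact ((hCmem x).mp hx.1).2.symm
    · rw [hC₁] at hx
      exact (G.mem_neighborSet x y).mp (hx.2.1 hy)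
    · rw [hC₁] at hx; rw [hC₂] at hy
      exact keyCC x hx.1 hx.2.1 y hy.1 hy.2.1
    · rw [Set.mem_singleton_iff] at hy; subst hy
      rw [hC₃] at hx
      exact ((hCmem x).mp hx.1).2.symm
    · rw [hC₃] at hx
      exact (G.mem_neighborSet x y).mp (hx.2.1 hy)
    · rw [hC₃] at hx; rw [hC₂] at hy
      exact keyCC x hx.1 hx.2.1 y hy.1 hy.2.1
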